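/- Let A be a simplicial real arrangement in ℝ^ℓ. Then for each chamber C ∈ C(A), the line closure of the set of walls of C equals all of A: lc(W^C) = A. -/

import Mathlib

open Submodule

section ArrangementBasics

variable {𝕂 : Type*} [Field 𝕂] {V : Type*} [AddCommGroup V] [Module 𝕂 V]

/-- `H` is a (linear) hyperplane: the kernel of a nonzero linear form. -/
def IsHyperplane (H : Submodule 𝕂 V) : Prop :=
  ∃ f : Module.Dual 𝕂 V, f ≠ 0 ∧ LinearMap.ker f = H

/-- A central arrangement: a finite set of linear hyperplanes. -/
def IsArrangement (A : Set (Submodule 𝕂 V)) : Prop :=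
  A.Finite ∧ ∀ H ∈ A, IsHyperplane H

/-- The intersection lattice `L(A)`: all intersections of subsets of `A`
(with the ambient space `⊤ = sInf ∅` included). -/
def interLattice (A : Set (Submodule 𝕂 V)) : Set (Submodule 𝕂 V) :=
  {X | ∃ B ⊆ A, X = sInf B}

/-- The rank of an intersection: its codimension in the ambient space. -/
noncomputable def rk (X : Submodule 𝕂 V) : ℕ := Module.finrank 𝕂 (V ⧸ X)

/-- The localization `A_X` of `A` at `X`: all hyperplanes of `A` containing `X`. -/
def locz (A : Set (Submodule 𝕂 V)) (X : Submodule 𝕂 V) : Set (Submodule 𝕂 V) :=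
  {H | H ∈ A ∧ X ≤ H}

/-- The restriction `A^Z` of `A` to `Z`, an arrangement in (the vector space) `Z`:
the subspaces `Z ∩ H` for `H ∈ A ∖ A_Z`, viewed as submodules of `Z`. -/
def restr (A : Set (Submodule 𝕂 V)) (Z : Submodule 𝕂 V) : Set (Submodule 𝕂 ↥Z) :=
  {K | ∃ H ∈ A, ¬ Z ≤ H ∧ K = (Z ⊓ H).comap Z.subtype}

/-- `α` is a choice of defining linear forms for the arrangement `A`. -/
def IsDefiningForms (A : Set (Submodule 𝕂 V)) (α : Submodule 𝕂 V → Module.Dual 𝕂 V) : Prop :=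
  ∀ H ∈ A, LinearMap.ker (α H) = H

/-- The relation space `F(A)` with respect to the chosen defining forms `α`:
the kernel of `⊕_{H ∈ A} 𝕂·e_H → V*`, `e_H ↦ α_H`, realized as the space of finitely
supported coefficient functions supported on `A` whose linear combination vanishes. -/
noncomputable def relSpace (A : Set (Submodule 𝕂 V)) (α : Submodule 𝕂 V → Module.Dual 𝕂 V) :
    Submodule 𝕂 (Submodule 𝕂 V →₀ 𝕂) :=
  Finsupp.supported 𝕂 𝕂 A ⊓ LinearMap.ker (Finsupp.linearCombination 𝕂 α)

/-- `F_2(A)`: the span of the elements of `F(A)` of length at most `3`. -/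
noncomputable def relSpace2 (A : Set (Submodule 𝕂 V)) (α : Submodule 𝕂 V → Module.Dual 𝕂 V) :
    Submodule 𝕂 (Submodule 𝕂 V →₀ 𝕂) :=
  Submodule.span 𝕂 {c | c ∈ relSpace A α ∧ c.support.card ≤ 3}

/-- `A` is formal if `F_2(A) = F(A)` (for any choice of defining forms). -/
def IsFormal (A : Set (Submodule 𝕂 V)) : Prop :=
  ∀ α : Submodule 𝕂 V → Module.Dual 𝕂 V,
    IsDefiningForms A α → relSpace2 A α = relSpace A α

end ArrangementBasics


section LineClosure

variable {𝕂 : Type*} [Field 𝕂] {V : Type*} [AddCommGroup V] [Module 𝕂 V]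

/-- A subset `B` of the arrangement `A` is line-closed if for every pair
`H, H' ∈ B` one has `A_{H ∩ H'} ⊆ B`. -/
def IsLineClosed (A B : Set (Submodule 𝕂 V)) : Prop :=
  B ⊆ A ∧ ∀ H ∈ B, ∀ H' ∈ B, locz A (H ⊓ H') ⊆ B

/-- The line closure `lc(B)` of `B` in `A`: the intersection of all line-closed
subsets of `A` containing `B`. -/
def lineClosure (A B : Set (Submodule 𝕂 V)) : Set (Submodule 𝕂 V) :=
  ⋂₀ {C | IsLineClosed A C ∧ B ⊆ C}

end LineClosure

section Simplicial

variable {ℓ : ℕ}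

/-- The complement of the union of the hyperplanes of `A` in `ℝ^ℓ`. -/
def hypComplement (A : Set (Submodule ℝ (Fin ℓ → ℝ))) : Set (Fin ℓ → ℝ) :=
  {x | ∀ H ∈ A, x ∉ H}

/-- The chambers of the real arrangement `A`: the connected components of the
complement of the union of its hyperplanes. -/
def chambers (A : Set (Submodule ℝ (Fin ℓ → ℝ))) : Set (Set (Fin ℓ → ℝ)) :=
  {C | ∃ x ∈ hypComplement A, C = connectedComponentIn (hypComplement A) x}

/-- `A` is simplicial: every chamber is an open simplicial cone, i.e. the set of
strictly positive linear combinations of `ℓ` linearly independent vectors. -/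
def IsSimplicial (A : Set (Submodule ℝ (Fin ℓ → ℝ))) : Prop :=
  ∀ C ∈ chambers A, ∃ v : Fin ℓ → (Fin ℓ → ℝ), LinearIndependent ℝ v ∧
    C = {x | ∃ c : Fin ℓ → ℝ, (∀ i, 0 < c i) ∧ x = ∑ i, c i • v i}

/-- The walls of a chamber `C`: the hyperplanes `H ∈ A` such that the linear span of
`cl(C) ∩ H` is all of `H`. -/
def walls (A : Set (Submodule ℝ (Fin ℓ → ℝ))) (C : Set (Fin ℓ → ℝ)) :
    Set (Submodule ℝ (Fin ℓ → ℝ)) :=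
  {H | H ∈ A ∧ Submodule.span ℝ (closure C ∩ ↑H) = H}

end Simplicial


open Submodule Module

noncomputable section Aux

/-- sign transitivity -/
lemma sgn_trans {a b c : ℝ} (h1 : 0 < a * b) (h2 : 0 < b * c) : 0 < a * c := by
  by_contra h
  push_neg at h
  nlinarith [mul_pos h1 h2, sq_nonneg b]

lemma sgn_cancel {c a b : ℝ} (h : 0 < (c*a)*(c*b)) : 0 < a * b := by
  by_contra h'
  push_neg at h'
  nlinarith [sq_nonneg c]

lemma sgn_neg_trans {a b c : ℝ} (h1 : a * b < 0) (h2 : b * c < 0) : 0 < a * c := by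
  by_contra h
  push_neg at h
  nlinarith [mul_pos_of_neg_of_neg h1 h2, sq_nonneg b]

lemma sgn_iff {a b c : ℝ} (h : 0 < b * c) : a * b < 0 ↔ a * c < 0 := by
  have hb : b ≠ 0 := by rintro rfl; simp at h
  have hc : c ≠ 0 := by rintro rfl; simp at h
  constructor
  · intro h1
    rcases lt_trichotomy (a*c) 0 with h2|h2|h2
    · exact h2
    · rcases mul_eq_zero.mp h2 with rfl|rfl
      · simp at h1
      · simp at h
    · exact absurd (sgn_trans h2 (mul_comm b c ▸ h)) (by linarith)
  · intro h1
    rcases lt_trichotomy (a*b) 0 with h2|h2|h2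
    · exact h2
    · rcases mul_eq_zero.mp h2 with rfl|rfl
      · simp at h1
      · simp at h
    · exact absurd (sgn_trans h2 h) (by linarith)

/-- proportionality of forms with nested kernels -/
lemma exists_smul_of_ker_le {V : Type*} [AddCommGroup V] [Module ℝ V]
    {f g : Module.Dual ℝ V} (hf : f ≠ 0) (h : LinearMap.ker f ≤ LinearMap.ker g) :
    ∃ c : ℝ, g = c • f := by
  obtain ⟨v, hv⟩ : ∃ v, f v ≠ 0 := by
    by_contra h'
    push_neg at h'
    exact hf (LinearMap.ext fun x => h' x)
  refine ⟨g v / f v, LinearMap.ext fun x => ?_⟩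
  have hx : x - (f x / f v) • v ∈ LinearMap.ker f := by
    simp [LinearMap.mem_ker, map_sub, map_smul, div_mul_cancel₀ _ hv]
  have := h hx
  simp only [LinearMap.mem_ker, map_sub, map_smul, smul_eq_mul] at this
  have : g x = f x / f v * g v := by linarith
  simp [LinearMap.smul_apply, smul_eq_mul]
  rw [this]
  ring

lemma exists_smul_ne_of_ker_eq {V : Type*} [AddCommGroup V] [Module ℝ V]
    {f g : Module.Dual ℝ V} (hf : f ≠ 0) (hg : g ≠ 0) (h : LinearMap.ker f = LinearMap.ker g) :
    ∃ c : ℝ, c ≠ 0 ∧ g = c • f := by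
  obtain ⟨c, hc⟩ := exists_smul_of_ker_le hf h.le
  refine ⟨c, ?_, hc⟩
  rintro rfl
  simp at hc
  exact hg hc

lemma ker_eq_of_ker_le {V : Type*} [AddCommGroup V] [Module ℝ V]
    {f g : Module.Dual ℝ V} (hf : f ≠ 0) (hg : g ≠ 0) (h : LinearMap.ker f ≤ LinearMap.ker g) :
    LinearMap.ker f = LinearMap.ker g := by
  obtain ⟨c, hc⟩ := exists_smul_of_ker_le hf h
  have hc0 : c ≠ 0 := by rintro rfl; simp at hc; exact hg hc
  rw [hc, LinearMap.ker_smul _ _ hc0]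

end Aux

noncomputable section SignClasses

open Submodule Module

variable {ℓ : ℕ}

/-- The sign class of a point `x` w.r.t. defining forms `α`. -/
def SCl (A : Set (Submodule ℝ (Fin ℓ → ℝ)))
    (α : Submodule ℝ (Fin ℓ → ℝ) → Module.Dual ℝ (Fin ℓ → ℝ)) (x : Fin ℓ → ℝ) :
    Set (Fin ℓ → ℝ) :=
  {y | ∀ H ∈ A, 0 < α H x * α H y}

/-- `α` is a good choice of forms for `A`. -/
def GoodForms (A : Set (Submodule ℝ (Fin ℓ → ℝ)))
    (α : Submodule ℝ (Fin ℓ → ℝ) → Module.Dual ℝ (Fin ℓ → ℝ)) : Prop :=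
  ∀ H ∈ A, α H ≠ 0 ∧ LinearMap.ker (α H) = H

variable {A : Set (Submodule ℝ (Fin ℓ → ℝ))}
  {α : Submodule ℝ (Fin ℓ → ℝ) → Module.Dual ℝ (Fin ℓ → ℝ)}

lemma mem_comp_iff (hα : GoodForms A α) {x : Fin ℓ → ℝ} :
    x ∈ hypComplement A ↔ ∀ H ∈ A, α H x ≠ 0 := by
  unfold hypComplement
  simp only [Set.mem_setOf_eq]
  constructor
  · intro h H hH h0
    exact h H hH (by rw [← (hα H hH).2]; exact h0)
  · intro h H hH hx
    exact h H hH (by rw [← (hα H hH).2] at hx; exact hx)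

lemma scl_subset_comp (hα : GoodForms A α) (x : Fin ℓ → ℝ) :
    SCl A α x ⊆ hypComplement A := by
  intro y hy
  rw [mem_comp_iff hα]
  intro H hH h0
  have := hy H hH
  rw [h0, mul_zero] at this
  exact lt_irrefl _ this

lemma mem_scl_self (hα : GoodForms A α) {x : Fin ℓ → ℝ} (hx : x ∈ hypComplement A) :
    x ∈ SCl A α x := by
  intro H hH
  exact mul_self_pos.mpr ((mem_comp_iff hα).mp hx H hH)

lemma isOpen_scl (hfin : A.Finite) (x : Fin ℓ → ℝ) : IsOpen (SCl A α x) := by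
  have : SCl A α x = ⋂ H ∈ A, {y | 0 < α H x * α H y} := by
    ext y; simp [SCl, Set.mem_iInter]
  rw [this]
  exact hfin.isOpen_biInter fun H _ =>
    isOpen_lt continuous_const (continuous_const.mul (α H).continuous_of_finiteDimensional)

lemma convex_scl (x : Fin ℓ → ℝ) : Convex ℝ (SCl A α x) := by
  intro y hy z hz a b ha hb hab
  intro H hH
  have h1 := hy H hH
  have h2 := hz H hH
  have : α H (a • y + b • z) = a * α H y + b * α H z := by
    simp [map_add, map_smul, smul_eq_mul]
  rw [this]
  have key : 0 < a * (α H x * α H y) + b * (α H x * α H z) := by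
    rcases eq_or_lt_of_le ha with h | h
    · have hb1 : b = 1 := by linarith
      rw [← h, hb1]; simpa using h2
    · exact add_pos_of_pos_of_nonneg (mul_pos h h1) (mul_nonneg hb h2.le)
  nlinarith [key]

lemma ccIn_eq_scl (hfin : A.Finite) (hα : GoodForms A α) {x : Fin ℓ → ℝ}
    (hx : x ∈ hypComplement A) :
    connectedComponentIn (hypComplement A) x = SCl A α x := by
  apply le_antisymm
  · have hopenV : IsOpen (⋃ H ∈ A, {y : Fin ℓ → ℝ | α H x * α H y < 0}) :=
      isOpen_biUnion fun H _ => isOpen_lt (g := fun _ : Fin ℓ → ℝ => (0:ℝ))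
        (continuous_const.mul (α H).continuous_of_finiteDimensional) continuous_const
    apply IsPreconnected.subset_left_of_subset_union (isOpen_scl hfin x) hopenV
    · rw [Set.disjoint_left]
      rintro y hy hy'
      simp only [Set.mem_iUnion, Set.mem_setOf_eq] at hy'
      obtain ⟨H, hH, hlt⟩ := hy'
      exact absurd (hy H hH) (not_lt.mpr hlt.le)
    · intro y hy
      have hy' := connectedComponentIn_subset (hypComplement A) x hy
      by_cases h : y ∈ SCl A α x
      · exact Or.inl h
      · right
        simp only [SCl, Set.mem_setOf_eq, not_forall] at h
        obtain ⟨H, hH, hle⟩ := h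
        simp only [Set.mem_iUnion]
        refine ⟨H, hH, ?_⟩
        rcases lt_or_eq_of_le (not_lt.mp hle) with h' | h'
        · exact h'
        · exfalso
          rcases mul_eq_zero.mp h' with h0 | h0
          · exact (mem_comp_iff hα).mp hx H hH h0
          · exact (mem_comp_iff hα).mp hy' H hH h0
    · exact ⟨x, mem_connectedComponentIn hx, mem_scl_self hα hx⟩
    · exact isPreconnected_connectedComponentIn
  · exact (convex_scl x).isPreconnected.subset_connectedComponentIn
      (mem_scl_self hα hx) (scl_subset_comp hα x)

lemma scl_eq_of_mem {x y : Fin ℓ → ℝ} (h : y ∈ SCl A α x) :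
    SCl A α x = SCl A α y := by
  ext z
  constructor
  · intro hz H hH
    exact sgn_trans (mul_comm (α H x) (α H y) ▸ h H hH) (hz H hH)
  · intro hz H hH
    exact sgn_trans (h H hH) (hz H hH)

lemma scl_eq_of_inter {x y : Fin ℓ → ℝ}
    (hne : (SCl A α x ∩ SCl A α y).Nonempty) : SCl A α x = SCl A α y := by
  obtain ⟨z, hzx, hzy⟩ := hne
  rw [scl_eq_of_mem hzx, scl_eq_of_mem hzy]

lemma chambers_iff (hfin : A.Finite) (hα : GoodForms A α) {C : Set (Fin ℓ → ℝ)} :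
    C ∈ chambers A ↔ ∃ x ∈ hypComplement A, C = SCl A α x := by
  unfold chambers
  simp only [Set.mem_setOf_eq]
  constructor
  · rintro ⟨x, hx, rfl⟩
    exact ⟨x, hx, ccIn_eq_scl hfin hα hx⟩
  · rintro ⟨x, hx, rfl⟩
    exact ⟨x, hx, (ccIn_eq_scl hfin hα hx).symm⟩

end SignClasses

noncomputable section ChamberData

open Submodule Module

variable {ℓ : ℕ}

/-- Simplicial-cone coordinate data for a chamber `C`. -/
structure CDat (C : Set (Fin ℓ → ℝ)) where
  w : Fin ℓ → Fin ℓ → ℝ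
  g : Fin ℓ → Module.Dual ℝ (Fin ℓ → ℝ)
  repr_eq : ∀ u : Fin ℓ → ℝ, ∑ j, g j u • w j = u
  dual : ∀ i j, g i (w j) = if i = j then (1:ℝ) else 0
  memC : ∀ u, u ∈ C ↔ ∀ j, 0 < g j u

variable {A : Set (Submodule ℝ (Fin ℓ → ℝ))}
  {α : Submodule ℝ (Fin ℓ → ℝ) → Module.Dual ℝ (Fin ℓ → ℝ)}
  {C : Set (Fin ℓ → ℝ)}

lemma exists_cdat (hsimp : IsSimplicial A) (hC : C ∈ chambers A) : Nonempty (CDat C) := by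
  obtain ⟨v, hli, hCeq⟩ := hsimp C hC
  rcases Nat.eq_zero_or_pos ℓ with h0 | hpos
  · subst h0
    refine ⟨⟨Fin.elim0, Fin.elim0, fun u => ?_, fun i => i.elim0, fun u => ?_⟩⟩
    · simpa using (Subsingleton.elim (0 : Fin 0 → ℝ) u)
    · constructor
      · intro _ j
        exact j.elim0
      · intro _
        rw [hCeq]
        exact ⟨fun _ => 1, fun i => i.elim0, Subsingleton.elim _ _⟩
  · have : Nonempty (Fin ℓ) := ⟨⟨0, hpos⟩⟩
    have hcard : Fintype.card (Fin ℓ) = Module.finrank ℝ (Fin ℓ → ℝ) := by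
      simp [Module.finrank_fin_fun]
    let b := basisOfLinearIndependentOfCardEqFinrank hli hcard
    have hb : ∀ k, b k = v k := fun k => by
      rw [coe_basisOfLinearIndependentOfCardEqFinrank]
    have hcoord : ∀ (c : Fin ℓ → ℝ) (j), b.coord j (∑ i, c i • v i) = c j := by
      intro c j
      simp only [map_sum, map_smul, smul_eq_mul]
      have : ∀ i, b.coord j (v i) = if i = j then (1:ℝ) else 0 := by
        intro i
        rw [← hb, Basis.coord_apply, Basis.repr_self, Finsupp.single_apply]
      have h2 : ∀ i, c i * b.coord j (v i) = if i = j then c i else 0 := by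
        intro i
        rw [this i]
        by_cases h : i = j
        · subst h; simp
        · simp [h]
      rw [Finset.sum_congr rfl (fun i _ => h2 i), Finset.sum_ite_eq']
      simp
    refine ⟨⟨v, fun j => b.coord j, fun u => ?_, fun i j => ?_, fun u => ?_⟩⟩
    · rw [show (∑ j, b.coord j u • v j) = ∑ j, b.repr u j • b j from
        Finset.sum_congr rfl (fun j _ => by rw [Basis.coord_apply, hb]), b.sum_repr]
    · rw [← hb, Basis.coord_apply, Basis.repr_self, Finsupp.single_apply]
      by_cases h : i = j
      · simp [h]
      · simp [h, Ne.symm h]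
    · rw [hCeq]
      constructor
      · rintro ⟨c, hc, rfl⟩ j
        rw [hcoord]
        exact hc j
      · intro h
        refine ⟨fun j => b.coord j u, h, ?_⟩
        rw [show (∑ i, b.coord i u • v i) = ∑ i, b.repr u i • b i from
          Finset.sum_congr rfl (fun i _ => by rw [Basis.coord_apply, hb]), b.sum_repr]

lemma cd_coord (D : CDat C) (c : Fin ℓ → ℝ) (j : Fin ℓ) :
    D.g j (∑ i, c i • D.w i) = c j := by
  simp only [map_sum, map_smul, smul_eq_mul, D.dual]
  simp [mul_ite]

lemma cd_g_ne (D : CDat C) (j : Fin ℓ) : D.g j ≠ 0 := by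
  intro h
  have := D.dual j j
  rw [h] at this
  simp at this

lemma cd_ker_ne (D : CDat C) {i j : Fin ℓ} (hij : i ≠ j) :
    LinearMap.ker (D.g i) ≠ LinearMap.ker (D.g j) := by
  intro h
  have h1 : D.w i ∈ LinearMap.ker (D.g j) := by
    rw [LinearMap.mem_ker]
    have := D.dual j i
    simpa [if_neg (Ne.symm hij)] using this
  rw [← h, LinearMap.mem_ker] at h1
  have := D.dual i i
  rw [h1] at this
  simp at this

lemma cd_apply (D : CDat C) (H : Submodule ℝ (Fin ℓ → ℝ)) (u : Fin ℓ → ℝ) :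
    α H u = ∑ j, D.g j u * α H (D.w j) := by
  conv_lhs => rw [← D.repr_eq u]
  rw [map_sum]
  simp [map_smul, smul_eq_mul]

lemma cd_point_mem (D : CDat C) : (∑ j, D.w j) ∈ C := by
  rw [D.memC]
  intro j
  have : (∑ i, D.w i) = ∑ i, (1:ℝ) • D.w i := by simp
  rw [this, cd_coord]
  norm_num

lemma chamber_sign (hfin : A.Finite) (hα : GoodForms A α) (hC : C ∈ chambers A)
    {z1 z2 : Fin ℓ → ℝ} (h1 : z1 ∈ C) (h2 : z2 ∈ C) {H : Submodule ℝ (Fin ℓ → ℝ)}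
    (hH : H ∈ A) : 0 < α H z1 * α H z2 := by
  obtain ⟨x, hx, rfl⟩ := (chambers_iff hfin hα).mp hC
  exact sgn_trans (mul_comm (α H x) (α H z1) ▸ h1 H hH) (h2 H hH)

lemma chamber_sub_comp (hfin : A.Finite) (hα : GoodForms A α) (hC : C ∈ chambers A) :
    C ⊆ hypComplement A := by
  obtain ⟨x, hx, rfl⟩ := (chambers_iff hfin hα).mp hC
  exact scl_subset_comp hα x

lemma cd_side (D : CDat C) (hfin : A.Finite) (hα : GoodForms A α) (hC : C ∈ chambers A)
    {H : Submodule ℝ (Fin ℓ → ℝ)} (hH : H ∈ A) {z : Fin ℓ → ℝ} (hz : z ∈ C) (j : Fin ℓ) :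
    0 ≤ α H z * α H (D.w j) := by
  by_contra hneg
  push_neg at hneg
  set s := α H z with hs
  set a := α H (D.w j) with ha
  have hs0 : s ≠ 0 := by intro h; rw [h] at hneg; simp at hneg
  have ht : 0 < -a / s := by
    rw [div_pos_iff]
    rcases mul_neg_iff.mp hneg with ⟨h1, h2⟩ | ⟨h1, h2⟩
    · exact Or.inl ⟨by linarith, h1⟩
    · exact Or.inr ⟨by linarith, h1⟩
  set t := -a / s with htdef
  have hq : (D.w j + t • z) ∈ C := by
    rw [D.memC]
    intro i
    have hgz : 0 < D.g i z := (D.memC z).mp hz i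
    have : D.g i (D.w j + t • z) = D.g i (D.w j) + t * D.g i z := by
      simp [map_add, map_smul, smul_eq_mul]
    rw [this, D.dual]
    have : 0 < t * D.g i z := mul_pos ht hgz
    split <;> linarith
  have hq0 : α H (D.w j + t • z) = 0 := by
    have : α H (D.w j + t • z) = a + t * s := by
      simp [map_add, map_smul, smul_eq_mul, ← ha, ← hs]
    rw [this, htdef]
    field_simp
    ring
  exact (mem_comp_iff hα).mp (chamber_sub_comp hfin hα hC hq) H hH hq0

lemma cd_mul_expand (D : CDat C) (H : Submodule ℝ (Fin ℓ → ℝ)) (z : Fin ℓ → ℝ)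
    (c : Fin ℓ → ℝ) :
    α H z * α H (∑ j, c j • D.w j) = ∑ j, c j * (α H z * α H (D.w j)) := by
  rw [map_sum, Finset.mul_sum]
  congr 1
  ext j
  simp [map_smul, smul_eq_mul]
  ring

lemma cd_closure_sign (D : CDat C) (hfin : A.Finite) (hα : GoodForms A α)
    (hC : C ∈ chambers A) {H : Submodule ℝ (Fin ℓ → ℝ)} (hH : H ∈ A)
    {z : Fin ℓ → ℝ} (hz : z ∈ C) {c : Fin ℓ → ℝ} (hc : ∀ j, 0 ≤ c j)
    (hne : α H (∑ j, c j • D.w j) ≠ 0) :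
    0 < α H z * α H (∑ j, c j • D.w j) := by
  have hz0 : α H z ≠ 0 := (mem_comp_iff hα).mp (chamber_sub_comp hfin hα hC hz) H hH
  have hexp := cd_mul_expand (α := α) D H z c
  have hnn : 0 ≤ α H z * α H (∑ j, c j • D.w j) := by
    rw [hexp]
    exact Finset.sum_nonneg fun j _ => mul_nonneg (hc j) (cd_side D hfin hα hC hH hz j)
  exact lt_of_le_of_ne hnn (Ne.symm (mul_ne_zero hz0 hne))

lemma cd_zero_iff (D : CDat C) (hfin : A.Finite) (hα : GoodForms A α)
    (hC : C ∈ chambers A) {H : Submodule ℝ (Fin ℓ → ℝ)} (hH : H ∈ A)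
    {c : Fin ℓ → ℝ} (hc : ∀ j, 0 ≤ c j) :
    α H (∑ j, c j • D.w j) = 0 ↔ ∀ j, c j ≠ 0 → α H (D.w j) = 0 := by
  constructor
  · intro h0 j hcj
    have hp := cd_point_mem D
    have hz0 : α H (∑ i, D.w i) ≠ 0 :=
      (mem_comp_iff hα).mp (chamber_sub_comp hfin hα hC hp) H hH
    have hexp : (0:ℝ) = ∑ i, c i * (α H (∑ k, D.w k) * α H (D.w i)) := by
      rw [← cd_mul_expand (α := α) D H (∑ k, D.w k) c, h0, mul_zero]
    have hterm := (Finset.sum_eq_zero_iff_of_nonneg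
      (fun i _ => mul_nonneg (hc i) (cd_side D hfin hα hC hH hp i))).mp hexp.symm
      j (Finset.mem_univ j)
    rcases mul_eq_zero.mp hterm with h | h
    · exact absurd h hcj
    · rcases mul_eq_zero.mp h with h' | h'
      · exact absurd h' hz0
      · exact h'
  · intro h
    rw [map_sum]
    apply Finset.sum_eq_zero
    intro j _
    rcases eq_or_ne (c j) 0 with h' | h'
    · simp [h']
    · simp [map_smul, smul_eq_mul, h j h']

end ChamberData

noncomputable section MoreChamber

open Submodule Module

variable {ℓ : ℕ} {A : Set (Submodule ℝ (Fin ℓ → ℝ))}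
  {α : Submodule ℝ (Fin ℓ → ℝ) → Module.Dual ℝ (Fin ℓ → ℝ)}
  {C : Set (Fin ℓ → ℝ)}

/-- If all the `w i`, `i ≠ j`, are killed by `α H`, then `α H` is a multiple of `g j`. -/
lemma cd_form_eq (D : CDat C) {H : Submodule ℝ (Fin ℓ → ℝ)} {j : Fin ℓ}
    (h : ∀ i, i ≠ j → α H (D.w i) = 0) :
    α H = α H (D.w j) • D.g j := by
  apply LinearMap.ext
  intro u
  rw [cd_apply (α := α) D H u]
  rw [Finset.sum_eq_single j]
  · simp [smul_eq_mul]; ring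
  · intro i _ hij
    simp [h i hij]
  · intro h'
    exact absurd (Finset.mem_univ j) h'

lemma cd_ker_mem (D : CDat C) (hfin : A.Finite) (hα : GoodForms A α)
    (hC : C ∈ chambers A) (j : Fin ℓ) : LinearMap.ker (D.g j) ∈ A := by
  by_contra hnot
  classical
  set c : Fin ℓ → ℝ := fun i => if i = j then 0 else 1 with hc
  set y : Fin ℓ → ℝ := ∑ i, c i • D.w i with hy
  have hcnn : ∀ i, 0 ≤ c i := by
    intro i
    simp only [hc]
    split <;> norm_num
  have hycomp : y ∈ hypComplement A := by
    rw [mem_comp_iff hα]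
    intro H hH h0
    have hker := (cd_zero_iff D hfin hα hC hH hcnn).mp h0
    have hzero : ∀ i, i ≠ j → α H (D.w i) = 0 := by
      intro i hij
      apply hker
      simp [hc, hij]
    have hform := cd_form_eq (α := α) D hzero
    have haj : α H (D.w j) ≠ 0 := by
      intro h'
      apply (hα H hH).1
      rw [hform, h', zero_smul]
    have : LinearMap.ker (α H) = LinearMap.ker (D.g j) := by
      rw [hform, LinearMap.ker_smul _ _ haj]
    rw [(hα H hH).2] at this
    exact hnot (this ▸ hH)
  set p : Fin ℓ → ℝ := ∑ i, D.w i with hp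
  have hpC : p ∈ C := cd_point_mem D
  set q : Fin ℓ → ℝ := (1/2 : ℝ) • y + (1/2 : ℝ) • p with hq
  have hqC : q ∈ C := by
    rw [D.memC]
    intro i
    have h1 : D.g i y = c i := by rw [hy, cd_coord]
    have h2 : D.g i p = 1 := by
      have : p = ∑ k, (1:ℝ) • D.w k := by rw [hp]; simp
      rw [this, cd_coord]
    have : D.g i q = (1/2) * c i + (1/2) * 1 := by
      rw [hq, map_add, map_smul, map_smul, smul_eq_mul, smul_eq_mul, h1, h2]
    rw [this]
    have := hcnn i
    linarith
  have hqScl : q ∈ SCl A α y := by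
    intro H hH
    have hy0 : α H y ≠ 0 := (mem_comp_iff hα).mp hycomp H hH
    have hyp : 0 < α H p * α H y := cd_closure_sign D hfin hα hC hH hpC hcnn (hy ▸ hy0)
    have : α H q = (1/2) * α H y + (1/2) * α H p := by
      rw [hq, map_add, map_smul, map_smul, smul_eq_mul, smul_eq_mul]
    rw [this]
    nlinarith [mul_self_pos.mpr hy0]
  obtain ⟨x, hx, hCeq⟩ := (chambers_iff hfin hα).mp hC
  have hqx : q ∈ SCl A α x := by rw [← hCeq]; exact hqC
  have : SCl A α x = SCl A α y := scl_eq_of_inter ⟨q, hqx, hqScl⟩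
  have hyC : y ∈ C := by
    rw [hCeq, this]
    exact mem_scl_self hα hycomp
  have := (D.memC y).mp hyC j
  rw [hy, cd_coord] at this
  simp [hc] at this

lemma cd_closure_sub (D : CDat C) : closure C ⊆ {u | ∀ j, 0 ≤ D.g j u} := by
  have hclosed : IsClosed {u : Fin ℓ → ℝ | ∀ j, 0 ≤ D.g j u} := by
    have : {u : Fin ℓ → ℝ | ∀ j, 0 ≤ D.g j u} = ⋂ j, {u | 0 ≤ D.g j u} := by
      ext u; simp [Set.mem_iInter]
    rw [this]
    exact isClosed_iInter fun j =>
      isClosed_le continuous_const (D.g j).continuous_of_finiteDimensional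
  exact closure_minimal (fun u hu j => ((D.memC u).mp hu j).le) hclosed

lemma cd_w_mem_closure (D : CDat C) (i : Fin ℓ) : D.w i ∈ closure C := by
  set p : Fin ℓ → ℝ := ∑ k, D.w k with hp
  have hmem : ∀ n : ℕ, D.w i + (1 / (n+1) : ℝ) • p ∈ C := by
    intro n
    rw [D.memC]
    intro k
    have h1 : D.g k (D.w i) = if k = i then 1 else 0 := D.dual k i
    have h2 : D.g k p = 1 := by
      have : p = ∑ m, (1:ℝ) • D.w m := by rw [hp]; simp
      rw [this, cd_coord]
    have hpos : (0:ℝ) < 1 / (n+1) := by positivity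
    have : D.g k (D.w i + (1 / (n+1) : ℝ) • p) = (if k = i then (1:ℝ) else 0) + (1/(n+1)) := by
      rw [map_add, map_smul, smul_eq_mul, h1, h2, mul_one]
    rw [this]
    split <;> linarith
  apply mem_closure_of_tendsto (f := fun n : ℕ => D.w i + (1 / (n+1) : ℝ) • p)
    (b := Filter.atTop)
  · have h0 : Filter.Tendsto (fun n : ℕ => (1 / (n+1) : ℝ)) Filter.atTop (nhds 0) :=
      tendsto_one_div_add_atTop_nhds_zero_nat
    have := (h0.smul_const p).const_add (D.w i)
    simpa using this
  · exact Filter.Eventually.of_forall hmem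

lemma cd_walls (D : CDat C) (hfin : A.Finite) (hα : GoodForms A α)
    (hC : C ∈ chambers A) :
    walls A C = {H' | ∃ j, H' = LinearMap.ker (D.g j)} := by
  ext H'
  constructor
  · rintro ⟨hH'A, hspan⟩
    have hp := cd_point_mem D
    have hsp : α H' (∑ k, D.w k) ≠ 0 :=
      (mem_comp_iff hα).mp (chamber_sub_comp hfin hα hC hp) H' hH'A
    have hside := fun j => cd_side D hfin hα hC hH'A hp j
    obtain ⟨j0, hj0⟩ : ∃ j, α H' (D.w j) ≠ 0 := by
      by_contra h
      push_neg at h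
      apply (hα H' hH'A).1
      apply LinearMap.ext
      intro u
      rw [cd_apply (α := α) D H' u]
      simp [h]
    have hsub : closure C ∩ (H' : Set (Fin ℓ → ℝ)) ⊆ (LinearMap.ker (D.g j0) : Set _) := by
      rintro u ⟨hu1, hu2⟩
      have hg : ∀ k, 0 ≤ D.g k u := cd_closure_sub D hu1
      have hu0 : α H' u = 0 := by
        have : u ∈ LinearMap.ker (α H') := by rw [(hα H' hH'A).2]; exact hu2
        exact this
      have hexp : (0:ℝ) = ∑ k, D.g k u * (α H' (∑ m, D.w m) * α H' (D.w k)) := by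
        have h1 : α H' (∑ m, D.w m) * α H' u
            = ∑ k, D.g k u * (α H' (∑ m, D.w m) * α H' (D.w k)) := by
          have := cd_mul_expand (α := α) D H' (∑ m, D.w m) (fun k => D.g k u)
          rw [← this]
          congr 1
          conv_lhs => rw [← D.repr_eq u]
        rw [← h1, hu0, mul_zero]
      have hterm := (Finset.sum_eq_zero_iff_of_nonneg
        (fun k _ => mul_nonneg (hg k) (hside k))).mp hexp.symm j0 (Finset.mem_univ j0)
      rcases mul_eq_zero.mp hterm with h | h
      · simpa using h
      · exact absurd h (mul_ne_zero hsp hj0)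
    refine ⟨j0, ?_⟩
    have hle : H' ≤ LinearMap.ker (D.g j0) := by
      rw [← hspan]
      exact span_le.mpr hsub
    have : LinearMap.ker (α H') ≤ LinearMap.ker (D.g j0) := by
      rw [(hα H' hH'A).2]; exact hle
    rw [← (hα H' hH'A).2]
    exact ker_eq_of_ker_le (hα H' hH'A).1 (cd_g_ne D j0) this
  · rintro ⟨j, rfl⟩
    refine ⟨cd_ker_mem D hfin hα hC j, ?_⟩
    apply le_antisymm
    · exact span_le.mpr Set.inter_subset_right
    · intro u hu
      have hu0 : D.g j u = 0 := hu
      have hrep : u = ∑ k, D.g k u • D.w k := (D.repr_eq u).symm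
      rw [hrep]
      apply Submodule.sum_mem
      intro k _
      rcases eq_or_ne k j with rfl | hkj
      · rw [hu0, zero_smul]
        exact Submodule.zero_mem _
      · apply Submodule.smul_mem
        apply Submodule.subset_span
        refine ⟨cd_w_mem_closure D k, ?_⟩
        have : D.g j (D.w k) = 0 := by
          have := D.dual j k
          rwa [if_neg (Ne.symm hkj)] at this
        exact this

end MoreChamber

noncomputable section Helpers

open Submodule Module

variable {ℓ : ℕ} {A : Set (Submodule ℝ (Fin ℓ → ℝ))}
  {α : Submodule ℝ (Fin ℓ → ℝ) → Module.Dual ℝ (Fin ℓ → ℝ)}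

lemma exists_eps {ι : Type*} {S : Set ι} (hS : S.Finite) (f : ι → ℝ → ℝ)
    (hc : ∀ i ∈ S, Continuous (f i)) (h0 : ∀ i ∈ S, 0 < f i 0) :
    ∃ ε : ℝ, 0 < ε ∧ ∀ i ∈ S, 0 < f i ε := by
  have hopen : IsOpen (⋂ i ∈ S, (f i) ⁻¹' Set.Ioi 0) :=
    hS.isOpen_biInter fun i hi => isOpen_Ioi.preimage (hc i hi)
  have h0m : (0:ℝ) ∈ ⋂ i ∈ S, (f i) ⁻¹' Set.Ioi 0 := by
    simp only [Set.mem_iInter, Set.mem_preimage, Set.mem_Ioi]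
    exact h0
  obtain ⟨δ, hδ, hball⟩ := Metric.isOpen_iff.mp hopen 0 h0m
  refine ⟨δ/2, by linarith, ?_⟩
  intro i hi
  have hmem : (δ/2 : ℝ) ∈ Metric.ball (0:ℝ) δ := by
    rw [Metric.mem_ball, Real.dist_eq, sub_zero, abs_of_pos (by linarith)]
    linarith
  have := hball hmem
  simp only [Set.mem_iInter, Set.mem_preimage, Set.mem_Ioi] at this
  exact this i hi

lemma closure_mem_of_sign (hα : GoodForms A α) {x' z : Fin ℓ → ℝ}
    (hx' : x' ∈ hypComplement A)
    (h : ∀ H ∈ A, α H z ≠ 0 → 0 < α H z * α H x') :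
    z ∈ closure (SCl A α x') := by
  set q : ℕ → Fin ℓ → ℝ := fun n => z + (1/(n+1) : ℝ) • (x' - z) with hq
  have hmem : ∀ n, q n ∈ SCl A α x' := by
    intro n H hH
    have hcast : (0:ℝ) < (n:ℝ) + 1 := by positivity
    have ht0 : (0:ℝ) < 1/(n+1) := by positivity
    have ht1 : (1/(n+1) : ℝ) ≤ 1 := by
      rw [div_le_one hcast]
      linarith [Nat.cast_nonneg (α := ℝ) n]
    have hx0 : α H x' ≠ 0 := (mem_comp_iff hα).mp hx' H hH
    have hval : α H (q n) = (1 - 1/(n+1)) * α H z + (1/(n+1)) * α H x' := by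
      simp only [hq, map_add, map_smul, map_sub, smul_eq_mul]
      ring
    rw [hval]
    rcases eq_or_ne (α H z) 0 with h0 | h0
    · rw [h0]
      nlinarith [mul_self_pos.mpr hx0]
    · nlinarith [h H hH h0, mul_self_pos.mpr hx0]
  apply mem_closure_of_tendsto (f := q) (b := Filter.atTop)
  · have h0 : Filter.Tendsto (fun n : ℕ => (1/(n+1) : ℝ)) Filter.atTop (nhds 0) :=
      tendsto_one_div_add_atTop_nhds_zero_nat
    have := (h0.smul_const (x' - z)).const_add z
    simpa [hq] using this
  · exact Filter.Eventually.of_forall hmem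

lemma finrank_ker_add_one {f : Module.Dual ℝ (Fin ℓ → ℝ)} (hf : f ≠ 0) :
    finrank ℝ (LinearMap.ker f) + 1 = ℓ := by
  obtain ⟨v, hv⟩ : ∃ v, f v ≠ 0 := by
    by_contra h'
    push_neg at h'
    exact hf (LinearMap.ext fun x => h' x)
  have hr : LinearMap.range f = ⊤ := by
    rw [eq_top_iff]
    intro a _
    exact ⟨(a / f v) • v, by simp [map_smul, smul_eq_mul]; field_simp⟩
  have h := LinearMap.finrank_range_add_finrank_ker f
  rw [hr, finrank_top] at h
  rw [Module.finrank_self, Module.finrank_fin_fun] at h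
  omega

lemma finrank_inf_two {f h : Module.Dual ℝ (Fin ℓ → ℝ)} (hf : f ≠ 0) (hh : h ≠ 0)
    (hne : LinearMap.ker f ≠ LinearMap.ker h) :
    finrank ℝ ((LinearMap.ker f ⊓ LinearMap.ker h : Submodule ℝ (Fin ℓ → ℝ))) + 2 = ℓ := by
  have h1 := finrank_ker_add_one hf
  have h2 := finrank_ker_add_one hh
  have hlt : LinearMap.ker f < LinearMap.ker f ⊔ LinearMap.ker h := by
    rcases (le_sup_left :
        LinearMap.ker f ≤ LinearMap.ker f ⊔ LinearMap.ker h).lt_or_eq with h' | h'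
    · exact h'
    · exfalso
      apply hne
      have hle : LinearMap.ker h ≤ LinearMap.ker f := le_sup_right.trans h'.ge
      exact (ker_eq_of_ker_le hh hf hle).symm
  have h3 := Submodule.finrank_lt_finrank_of_lt hlt
  have h4 : finrank ℝ (LinearMap.ker f ⊔ LinearMap.ker h : Submodule ℝ (Fin ℓ → ℝ)) ≤ ℓ := by
    have := Submodule.finrank_le (LinearMap.ker f ⊔ LinearMap.ker h)
    rwa [Module.finrank_fin_fun] at this
  have h5 := Submodule.finrank_sup_add_finrank_inf_eq (LinearMap.ker f) (LinearMap.ker h)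
  omega

lemma exists_generic (hA : IsArrangement A) {H : Submodule ℝ (Fin ℓ → ℝ)} (hH : H ∈ A) :
    ∃ y, y ∈ H ∧ ∀ H' ∈ A, H' ≠ H → y ∉ H' := by
  classical
  obtain ⟨f, hf0, hfk⟩ := hA.2 H hH
  set s : Finset (Subspace ℝ H) :=
    (hA.1.toFinset.erase H).image (fun H' => H'.comap H.subtype) with hs
  have htop : ⊤ ∉ s := by
    intro hmem
    simp only [hs, Finset.mem_image, Finset.mem_erase] at hmem
    obtain ⟨H', ⟨hne, hH'A⟩, heq⟩ := hmem
    rw [Set.Finite.mem_toFinset] at hH'A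
    have hle : H ≤ H' := by
      rw [← Submodule.comap_subtype_eq_top, heq]
    obtain ⟨f', hf'0, hf'k⟩ := hA.2 H' hH'A
    apply hne
    rw [← hfk, ← hf'k] at hle ⊢
    exact (ker_eq_of_ker_le hf0 hf'0 hle).symm
  have hne := Subspace.biUnion_ne_univ_of_top_notMem htop
  obtain ⟨y, hy⟩ := Set.ne_univ_iff_exists_notMem _ |>.mp hne
  refine ⟨(y : Fin ℓ → ℝ), y.2, ?_⟩
  intro H' hH'A hne' hmem
  apply hy
  simp only [Set.mem_iUnion]
  refine ⟨H'.comap H.subtype, ?_, ?_⟩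
  · simp only [hs, Finset.mem_image]
    exact ⟨H', Finset.mem_erase.mpr ⟨hne', (Set.Finite.mem_toFinset _).mpr hH'A⟩, rfl⟩
  · exact hmem

end Helpers

noncomputable section MainClaim

open Submodule Module

variable {ℓ : ℕ} {A : Set (Submodule ℝ (Fin ℓ → ℝ))}
  {α : Submodule ℝ (Fin ℓ → ℝ) → Module.Dual ℝ (Fin ℓ → ℝ)}

open Classical in
/-- The set of hyperplanes separating `x` from `y`. -/
def sepF (hfin : A.Finite) (α : Submodule ℝ (Fin ℓ → ℝ) → Module.Dual ℝ (Fin ℓ → ℝ))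
    (x y : Fin ℓ → ℝ) : Finset (Submodule ℝ (Fin ℓ → ℝ)) :=
  hfin.toFinset.filter (fun H => α H x * α H y < 0)

lemma cont_aux1 (φ : Module.Dual ℝ (Fin ℓ → ℝ)) (a b : Fin ℓ → ℝ) (r : ℝ) :
    Continuous (fun t : ℝ => r * φ (a - t • b)) := by
  have : (fun t : ℝ => r * φ (a - t • b)) = fun t => r * (φ a - t * φ b) := by
    funext t
    simp [map_sub, map_smul, smul_eq_mul]
  rw [this]
  exact continuous_const.mul (continuous_const.sub (continuous_id'.mul continuous_const))

set_option maxHeartbeats 1600000 in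
lemma main_claim (hA : IsArrangement A) (hα : GoodForms A α) (hsimp : IsSimplicial A)
    {x₀ : Fin ℓ → ℝ} (hx₀ : x₀ ∈ hypComplement A)
    {B : Set (Submodule ℝ (Fin ℓ → ℝ))} (hB : IsLineClosed A B)
    (hWC : walls A (SCl A α x₀) ⊆ B) :
    ∀ n : ℕ, ∀ y, y ∈ hypComplement A → (sepF hA.1 α x₀ y).card = n →
      walls A (SCl A α y) ⊆ B := by
  intro n
  induction n using Nat.strong_induction_on with
  | _ n IH =>
  intro y hy hcard
  have hKch : SCl A α y ∈ chambers A := (chambers_iff hA.1 hα).mpr ⟨y, hy, rfl⟩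
  obtain ⟨D⟩ := exists_cdat hsimp hKch
  have hyK : y ∈ SCl A α y := mem_scl_self hα hy
  rcases Nat.eq_zero_or_pos n with rfl | hn
  · -- base case: same chamber as x₀
    have hmem : y ∈ SCl A α x₀ := by
      intro H hH
      have h1 : α H x₀ ≠ 0 := (mem_comp_iff hα).mp hx₀ H hH
      have h2 : α H y ≠ 0 := (mem_comp_iff hα).mp hy H hH
      rcases lt_or_gt_of_ne (mul_ne_zero h1 h2) with hlt | hgt
      · exfalso
        have hmem' : H ∈ sepF hA.1 α x₀ y := by
          rw [sepF, Finset.mem_filter, Set.Finite.mem_toFinset]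
          exact ⟨hH, hlt⟩
        rw [Finset.card_eq_zero.mp hcard] at hmem'
        simp at hmem'
      · exact hgt
    rw [← scl_eq_of_mem hmem]
    exact hWC
  · -- inductive step
    have hkerA : ∀ j, LinearMap.ker (D.g j) ∈ A := fun j => cd_ker_mem D hA.1 hα hKch j
    have hprop : ∀ j, ∃ c : ℝ, c ≠ 0 ∧ α (LinearMap.ker (D.g j)) = c • D.g j := by
      intro j
      refine exists_smul_ne_of_ker_eq (cd_g_ne D j) (hα _ (hkerA j)).1 ?_
      rw [(hα _ (hkerA j)).2]
    -- find a separating wall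
    obtain ⟨i0, hi0⟩ : ∃ j, α (LinearMap.ker (D.g j)) x₀ * α (LinearMap.ker (D.g j)) y < 0 := by
      by_contra hno
      push_neg at hno
      have hx₀K : x₀ ∈ SCl A α y := by
        rw [D.memC]
        intro j
        obtain ⟨c, hc0, hceq⟩ := hprop j
        have h1 : α (LinearMap.ker (D.g j)) x₀ * α (LinearMap.ker (D.g j)) y ≠ 0 :=
          mul_ne_zero ((mem_comp_iff hα).mp hx₀ _ (hkerA j))
            ((mem_comp_iff hα).mp hy _ (hkerA j))
        have h2 : 0 < α (LinearMap.ker (D.g j)) x₀ * α (LinearMap.ker (D.g j)) y :=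
          (hno j).lt_of_ne (Ne.symm h1)
        rw [hceq] at h2
        simp only [LinearMap.smul_apply, smul_eq_mul] at h2
        have h3 : 0 < D.g j x₀ * D.g j y := sgn_cancel h2
        have h4 : 0 < D.g j y := (D.memC y).mp hyK j
        nlinarith
      have heq := scl_eq_of_mem hx₀K
      obtain ⟨H, hmemH⟩ := Finset.card_pos.mp (hcard ▸ hn)
      rw [sepF, Finset.mem_filter, Set.Finite.mem_toFinset] at hmemH
      have := hx₀K H hmemH.1
      nlinarith [hmemH.2]
    set Hs := LinearMap.ker (D.g i0) with hHs
    obtain ⟨cs, hcs0, hcseq⟩ := hprop i0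
    have hHsA : Hs ∈ A := hkerA i0
    classical
    set cF : Fin ℓ → ℝ := fun j => if j = i0 then 0 else 1 with hcF
    have hcFnn : ∀ j, 0 ≤ cF j := by
      intro j
      simp only [hcF]
      split <;> norm_num
    set yF : Fin ℓ → ℝ := ∑ j, cF j • D.w j with hyF
    have hyFne : ∀ H' ∈ A, H' ≠ Hs → α H' yF ≠ 0 := by
      intro H' hH' hne h0
      have hker := (cd_zero_iff D hA.1 hα hKch hH' hcFnn).mp h0
      have hz : ∀ i, i ≠ i0 → α H' (D.w i) = 0 := by
        intro i hii0
        apply hker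
        simp [hcF, hii0]
      have hform := cd_form_eq (α := α) D hz
      have ha0 : α H' (D.w i0) ≠ 0 := by
        intro h'
        exact (hα H' hH').1 (by rw [hform, h', zero_smul])
      apply hne
      rw [← (hα H' hH').2, hform, LinearMap.ker_smul _ _ ha0, hHs]
    have hyFsign : ∀ H' ∈ A, H' ≠ Hs → 0 < α H' y * α H' yF :=
      fun H' hH' hne => cd_closure_sign D hA.1 hα hKch hH' hyK hcFnn (hyFne H' hH' hne)
    obtain ⟨ε, hε, hε'⟩ := exists_eps (S := A \ {Hs}) hA.1.diff
      (f := fun H' t => α H' y * α H' (yF - t • D.w i0))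
      (fun H' _ => cont_aux1 (α H') yF (D.w i0) (α H' y))
      (by
        rintro H' ⟨hH'A, hH'ne⟩
        simpa using hyFsign H' hH'A hH'ne)
    set x' : Fin ℓ → ℝ := yF - ε • D.w i0 with hx'def
    have hsignx' : ∀ H' ∈ A, H' ≠ Hs → 0 < α H' y * α H' x' := by
      intro H' hH' hne
      exact hε' H' ⟨hH', hne⟩
    have hgx' : ∀ j, D.g j x' = cF j - ε * (if j = i0 then 1 else 0) := by
      intro j
      rw [hx'def, map_sub, map_smul]
      rw [hyF, cd_coord, smul_eq_mul, D.dual]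
    have hgi0x' : D.g i0 x' = -ε := by
      rw [hgx' i0]
      simp [hcF]
    have hαHsx' : α Hs x' = cs * (-ε) := by
      rw [hcseq, LinearMap.smul_apply, smul_eq_mul, hgi0x']
    have hx'comp : x' ∈ hypComplement A := by
      rw [mem_comp_iff hα]
      intro H' hH'
      rcases eq_or_ne H' Hs with rfl | hne
      · rw [hαHsx']
        intro h0
        rcases mul_eq_zero.mp h0 with h | h
        · exact hcs0 h
        · linarith
      · intro h0
        have := hsignx' H' hH' hne
        rw [h0, mul_zero] at this
        exact lt_irrefl _ this
    have hK'ch : SCl A α x' ∈ chambers A := (chambers_iff hA.1 hα).mpr ⟨x', hx'comp, rfl⟩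
    have hx'K' : x' ∈ SCl A α x' := mem_scl_self hα hx'comp
    -- separation set decreases
    have hgi0y : 0 < D.g i0 y := (D.memC y).mp hyK i0
    have hHsyx' : α Hs y * α Hs x' < 0 := by
      have h1 : α Hs y = cs * D.g i0 y := by
        rw [hcseq, LinearMap.smul_apply, smul_eq_mul]
      rw [h1, hαHsx']
      have hcs2 : 0 < cs * cs := mul_self_pos.mpr hcs0
      nlinarith [mul_pos (mul_pos hcs2 hgi0y) hε]
    have hHsSep : Hs ∈ sepF hA.1 α x₀ y := by
      rw [sepF, Finset.mem_filter, Set.Finite.mem_toFinset]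
      exact ⟨hHsA, hi0⟩
    have hsep' : sepF hA.1 α x₀ x' = (sepF hA.1 α x₀ y).erase Hs := by
      ext H'
      simp only [Finset.mem_erase, sepF, Finset.mem_filter, Set.Finite.mem_toFinset]
      by_cases hHH : H' = Hs
      · subst hHH
        simp only [ne_eq, not_true_eq_false, false_and, iff_false, not_and]
        intro _
        have := sgn_neg_trans hi0 hHsyx'
        linarith
      · constructor
        · rintro ⟨hH'A, hlt⟩
          exact ⟨hHH, hH'A, (sgn_iff (hsignx' H' hH'A hHH)).mpr hlt⟩
        · rintro ⟨_, hH'A, hlt⟩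
          exact ⟨hH'A, (sgn_iff (hsignx' H' hH'A hHH)).mp hlt⟩
    have hcard' : (sepF hA.1 α x₀ x').card = n - 1 := by
      rw [hsep', Finset.card_erase_of_mem hHsSep, hcard]
    have hK'walls : walls A (SCl A α x') ⊆ B :=
      IH (n-1) (by omega) x' hx'comp hcard'
    obtain ⟨D'⟩ := exists_cdat hsimp hK'ch
    -- facet points lie in the closure of K'
    have hfacet : ∀ c : Fin ℓ → ℝ, (∀ j, 0 ≤ c j) → c i0 = 0 →
        (∑ j, c j • D.w j) ∈ closure (SCl A α x') := by
      intro c hc hc0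
      apply closure_mem_of_sign hα hx'comp
      intro H' hH' hne0
      have hH'ne : H' ≠ Hs := by
        rintro rfl
        apply hne0
        rw [hcseq, LinearMap.smul_apply, smul_eq_mul, cd_coord, hc0, mul_zero]
      have h1 : 0 < α H' y * α H' (∑ j, c j • D.w j) :=
        cd_closure_sign D hA.1 hα hKch hH' hyK hc hne0
      exact sgn_trans (mul_comm (α H' y) _ ▸ h1) (hsignx' H' hH' hH'ne)
    -- Hs is a wall of K'
    have hHswall : Hs ∈ walls A (SCl A α x') := by
      refine ⟨hHsA, le_antisymm (span_le.mpr Set.inter_subset_right) ?_⟩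
      have hyFHs : yF ∈ closure (SCl A α x') ∩ (Hs : Set (Fin ℓ → ℝ)) := by
        refine ⟨hfacet cF hcFnn (by simp [hcF]), ?_⟩
        show yF ∈ Hs
        rw [hHs, LinearMap.mem_ker, hyF, cd_coord]
        simp [hcF]
      have hwk : ∀ k, k ≠ i0 →
          D.w k ∈ span ℝ (closure (SCl A α x') ∩ (Hs : Set (Fin ℓ → ℝ))) := by
        intro k hk
        set c2 : Fin ℓ → ℝ := fun j => cF j + if j = k then 1 else 0 with hc2
        have hc2nn : ∀ j, 0 ≤ c2 j := by
          intro j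
          have := hcFnn j
          simp only [hc2]
          split <;> linarith
        have hc2i0 : c2 i0 = 0 := by
          simp [hc2, hcF, Ne.symm hk]
        have h2 : (∑ j, c2 j • D.w j) ∈ closure (SCl A α x') ∩ (Hs : Set (Fin ℓ → ℝ)) := by
          refine ⟨hfacet c2 hc2nn hc2i0, ?_⟩
          show (∑ j, c2 j • D.w j) ∈ Hs
          rw [hHs, LinearMap.mem_ker, cd_coord, hc2i0]
        have hdiff : D.w k = (∑ j, c2 j • D.w j) - yF := by
          rw [hyF, ← Finset.sum_sub_distrib]
          have : ∀ j, c2 j • D.w j - cF j • D.w j = (if j = k then (1:ℝ) else 0) • D.w j := by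
            intro j
            rw [← sub_smul]
            congr 1
            simp [hc2]
          rw [Finset.sum_congr rfl (fun j _ => this j)]
          have h2' : ∀ j, ((if j = k then (1:ℝ) else 0) • D.w j)
              = if j = k then D.w j else 0 := by
            intro j
            split <;> simp
          rw [Finset.sum_congr rfl (fun j _ => h2' j),
            Finset.sum_ite_eq' Finset.univ k (fun j => D.w j)]
          simp
        rw [hdiff]
        exact sub_mem (subset_span h2) (subset_span hyFHs)
      intro u hu
      have hu0 : D.g i0 u = 0 := by
        rw [hHs, LinearMap.mem_ker] at hu
        exact hu
      have hrep : u = ∑ k, D.g k u • D.w k := (D.repr_eq u).symm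
      rw [hrep]
      apply Submodule.sum_mem
      intro k _
      rcases eq_or_ne k i0 with rfl | hkne
      · rw [hu0, zero_smul]
        exact Submodule.zero_mem _
      · exact Submodule.smul_mem _ _ (hwk k hkne)
    have hHsB : Hs ∈ B := hK'walls hHswall
    -- the other walls of K
    have hHiB : ∀ i, i ≠ i0 → LinearMap.ker (D.g i) ∈ B := by
      intro i hi
      set Hi := LinearMap.ker (D.g i) with hHi
      have hHiA : Hi ∈ A := hkerA i
      set c3 : Fin ℓ → ℝ := fun j => if j = i0 ∨ j = i then 0 else 1 with hc3
      have hc3nn : ∀ j, 0 ≤ c3 j := by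
        intro j
        simp only [hc3]
        split <;> norm_num
      have hc3i0 : c3 i0 = 0 := by simp [hc3]
      have hc3i : c3 i = 0 := by simp [hc3]
      set z : Fin ℓ → ℝ := ∑ j, c3 j • D.w j with hz
      have hgz : ∀ j, D.g j z = c3 j := by
        intro j
        rw [hz, cd_coord]
      have hzcl : z ∈ closure (SCl A α x') := hfacet c3 hc3nn hc3i0
      have hd : ∀ j, 0 ≤ D'.g j z := fun j => cd_closure_sub D' hzcl j
      by_cases hex : ∃ j, D'.g j z = 0 ∧ LinearMap.ker (D'.g j) ≠ Hs
      · obtain ⟨j, hdj, hjne⟩ := hex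
        set H2 := LinearMap.ker (D'.g j) with hH2
        have hH2A : H2 ∈ A := cd_ker_mem D' hA.1 hα hK'ch j
        have hH2wall : H2 ∈ walls A (SCl A α x') := by
          rw [cd_walls D' hA.1 hα hK'ch]
          exact ⟨j, rfl⟩
        have hH2B : H2 ∈ B := hK'walls hH2wall
        have hzH2 : α H2 z = 0 := by
          have : z ∈ LinearMap.ker (α H2) := by
            rw [(hα H2 hH2A).2, hH2, LinearMap.mem_ker]
            exact hdj
          exact this
        have hk0 := (cd_zero_iff D hA.1 hα hKch hH2A hc3nn).mp hzH2
        have hXle : (Hs ⊓ Hi : Submodule ℝ (Fin ℓ → ℝ)) ≤ H2 := by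
          intro u hu
          rw [Submodule.mem_inf] at hu
          have hui0 : D.g i0 u = 0 := LinearMap.mem_ker.mp hu.1
          have hui : D.g i u = 0 := LinearMap.mem_ker.mp hu.2
          have hα0 : α H2 u = 0 := by
            rw [cd_apply (α := α) D H2 u]
            apply Finset.sum_eq_zero
            intro k _
            by_cases hk : k = i0 ∨ k = i
            · rcases hk with rfl | rfl
              · rw [hui0, zero_mul]
              · rw [hui, zero_mul]
            · rw [hk0 k (by simp [hc3, hk]), mul_zero]
          rw [← (hα H2 hH2A).2, LinearMap.mem_ker]
          exact hα0
        have hXle2 : (Hs ⊓ Hi : Submodule ℝ (Fin ℓ → ℝ)) ≤ Hs ⊓ H2 :=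
          le_inf inf_le_left hXle
        have hfr1 : finrank ℝ (Hs ⊓ Hi : Submodule ℝ (Fin ℓ → ℝ)) + 2 = ℓ := by
          rw [hHs, hHi]
          exact finrank_inf_two (cd_g_ne D i0) (cd_g_ne D i)
            (cd_ker_ne D (fun h => hi h.symm))
        have hfr2 : finrank ℝ (Hs ⊓ H2 : Submodule ℝ (Fin ℓ → ℝ)) + 2 = ℓ := by
          rw [hHs, hH2]
          exact finrank_inf_two (cd_g_ne D i0) (cd_g_ne D' j)
            (fun h => hjne (by rw [hH2, ← h, hHs]))
        have hXeq : (Hs ⊓ Hi : Submodule ℝ (Fin ℓ → ℝ)) = Hs ⊓ H2 :=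
          Submodule.eq_of_le_of_finrank_le hXle2 (by omega)
        have hmemloc : Hi ∈ locz A (Hs ⊓ H2) := by
          refine ⟨hHiA, ?_⟩
          rw [← hXeq]
          exact inf_le_right
        exact hB.2 Hs hHsB H2 hH2B hmemloc
      · -- impossible: build two points of K' on opposite sides of Hi
        exfalso
        push_neg at hex
        obtain ⟨ε₂, hε₂, hε₂'⟩ := exists_eps (S := {j : Fin ℓ | 0 < D'.g j z})
          (Set.toFinite _)
          (f := fun j t => min (D'.g j (z - t • (D.w i0 + D.w i)))
            (D'.g j (z + t • (D.w i - D.w i0))))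
          (by
            intro j _
            have e1 : (fun t : ℝ => D'.g j (z - t • (D.w i0 + D.w i)))
                = fun t => D'.g j z - t * D'.g j (D.w i0 + D.w i) := by
              funext t
              simp [map_sub, map_smul, smul_eq_mul]
              try ring
            have e2 : (fun t : ℝ => D'.g j (z + t • (D.w i - D.w i0)))
                = fun t => D'.g j z + t * D'.g j (D.w i - D.w i0) := by
              funext t
              simp [map_add, map_smul, smul_eq_mul]
              try ring
            apply Continuous.min
            · rw [e1]
              exact continuous_const.sub (continuous_id'.mul continuous_const)
            · rw [e2]
              exact continuous_const.add (continuous_id'.mul continuous_const))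
          (by
            intro j hj
            simp only [Set.mem_setOf_eq] at hj
            simp only [zero_smul, sub_zero, add_zero, lt_min_iff]
            exact ⟨hj, hj⟩)
        set u₁ : Fin ℓ → ℝ := z - ε₂ • (D.w i0 + D.w i) with hu₁
        set u₂ : Fin ℓ → ℝ := z + ε₂ • (D.w i - D.w i0) with hu₂
        have hi0i : i0 ≠ i := fun h => hi h.symm
        have hgu₁a : D.g i0 u₁ = -ε₂ := by
          rw [hu₁, map_sub, map_smul, hgz, map_add, D.dual, D.dual, smul_eq_mul]
          simp [hc3i0, hi0i]
        have hgu₁b : D.g i u₁ = -ε₂ := by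
          rw [hu₁, map_sub, map_smul, hgz, map_add, D.dual, D.dual, smul_eq_mul]
          simp [hc3i, hi]
        have hgu₂a : D.g i0 u₂ = -ε₂ := by
          rw [hu₂, map_add, map_smul, hgz, map_sub, D.dual, D.dual, smul_eq_mul]
          simp [hc3i0, hi0i]
        have hgu₂b : D.g i u₂ = ε₂ := by
          rw [hu₂, map_add, map_smul, hgz, map_sub, D.dual, D.dual, smul_eq_mul]
          simp [hc3i, hi]
        have hkermem : ∀ j, D'.g j z = 0 →
            ∃ lj : ℝ, lj < 0 ∧ D'.g j = lj • D.g i0 := by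
          intro j hj0
          have hker := hex j hj0
          rw [hHs] at hker
          obtain ⟨lj, hl0, hleq⟩ := exists_smul_ne_of_ker_eq (cd_g_ne D i0) (cd_g_ne D' j)
            hker.symm
          refine ⟨lj, ?_, hleq⟩
          have h1 : 0 < D'.g j x' := (D'.memC x').mp hx'K' j
          rw [hleq, LinearMap.smul_apply, smul_eq_mul, hgi0x'] at h1
          nlinarith
        have hu₁K' : u₁ ∈ SCl A α x' := by
          rw [D'.memC]
          intro j
          rcases (hd j).lt_or_eq with hpos | heq0
          · exact lt_min_iff.mp (hε₂' j hpos) |>.1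
          · obtain ⟨lj, hlneg, hleq⟩ := hkermem j heq0.symm
            rw [hleq, LinearMap.smul_apply, smul_eq_mul, hgu₁a]
            nlinarith
        have hu₂K' : u₂ ∈ SCl A α x' := by
          rw [D'.memC]
          intro j
          rcases (hd j).lt_or_eq with hpos | heq0
          · exact lt_min_iff.mp (hε₂' j hpos) |>.2
          · obtain ⟨lj, hlneg, hleq⟩ := hkermem j heq0.symm
            rw [hleq, LinearMap.smul_apply, smul_eq_mul, hgu₂a]
            nlinarith
        obtain ⟨ci, hci0, hcieq⟩ := hprop i
        have h1 : 0 < α Hi x' * α Hi u₁ := hu₁K' Hi hHiA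
        have h2 : 0 < α Hi x' * α Hi u₂ := hu₂K' Hi hHiA
        have h3 : 0 < α Hi u₁ * α Hi u₂ :=
          sgn_trans (mul_comm (α Hi x') (α Hi u₁) ▸ h1) h2
        rw [← hHi] at hcieq
        rw [hcieq, LinearMap.smul_apply, LinearMap.smul_apply, smul_eq_mul, smul_eq_mul,
          hgu₁b, hgu₂b] at h3
        have hc2 : 0 < ci * ci := mul_self_pos.mpr hci0
        nlinarith [mul_pos hc2 (mul_pos hε₂ hε₂)]
    -- conclude
    intro H' hH'
    rw [cd_walls D hA.1 hα hKch] at hH'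
    obtain ⟨j, rfl⟩ := hH'
    rcases eq_or_ne j i0 with rfl | hj
    · exact hHsB
    · exact hHiB j hj

end MainClaim

open Submodule Module in
/-- **Proposition 2.9** (`prop:WallsLCBasis`): let `A` be a simplicial central arrangement
in `ℝ^ℓ`.  Then for each chamber `C` of `A`, the line closure of the set of walls of `C`
is all of `A`. -/
theorem simplicial_walls_lineClosure_eq {ℓ : ℕ}
    (A : Set (Submodule ℝ (Fin ℓ → ℝ))) (hA : IsArrangement A) (hsimp : IsSimplicial A)
    (C : Set (Fin ℓ → ℝ)) (hC : C ∈ chambers A) :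
    lineClosure A (walls A C) = A := by
  classical
  -- choose defining forms
  have hforms : ∀ H : Submodule ℝ (Fin ℓ → ℝ),
      ∃ f : Module.Dual ℝ (Fin ℓ → ℝ), H ∈ A → (f ≠ 0 ∧ LinearMap.ker f = H) := by
    intro H
    by_cases h : H ∈ A
    · obtain ⟨f, h1, h2⟩ := hA.2 H h
      exact ⟨f, fun _ => ⟨h1, h2⟩⟩
    · exact ⟨0, fun hh => absurd hh h⟩
  choose α hα using hforms
  have hαg : GoodForms A α := fun H hH => hα H hH
  apply Set.Subset.antisymm
  · -- lineClosure ⊆ A since A itself is line-closed and contains the walls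
    apply Set.sInter_subset_of_mem
    exact ⟨⟨subset_rfl, fun H _ H' _ K hK => hK.1⟩, fun H hH => hH.1⟩
  · intro H hH
    apply Set.mem_sInter.mpr
    rintro B ⟨hB, hWB⟩
    obtain ⟨x₀, hx₀, hCeq⟩ := (chambers_iff hA.1 hαg).mp hC
    rw [hCeq] at hWB
    -- generic point of H
    obtain ⟨y₀, hy₀H, hy₀⟩ := exists_generic hA hH
    have hy₀0 : α H y₀ = 0 := by
      have : y₀ ∈ LinearMap.ker (α H) := by
        rw [(hαg H hH).2]
        exact hy₀H
      exact this
    obtain ⟨v, hv⟩ : ∃ v, α H v ≠ 0 := by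
      by_contra h'
      push_neg at h'
      exact (hαg H hH).1 (LinearMap.ext fun u => h' u)
    have hy₀ne : ∀ H' ∈ A, H' ≠ H → α H' y₀ ≠ 0 := by
      intro H' hH' hne h0
      apply hy₀ H' hH' hne
      rw [← (hαg H' hH').2]
      exact h0
    -- pick a nearby chamber
    obtain ⟨ε, hε, hε'⟩ := exists_eps (S := A \ {H}) hA.1.diff
      (f := fun H' t => α H' y₀ * α H' (y₀ - t • (-v)))
      (fun H' _ => cont_aux1 (α H') y₀ (-v) (α H' y₀))
      (by
        rintro H' ⟨hH'A, hH'ne⟩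
        simpa using mul_self_pos.mpr (hy₀ne H' hH'A hH'ne))
    set x : Fin ℓ → ℝ := y₀ - ε • (-v) with hxdef
    have hαHx : α H x = ε * α H v := by
      rw [hxdef, map_sub, map_smul, hy₀0, smul_eq_mul, map_neg]
      ring
    have hxcomp : x ∈ hypComplement A := by
      rw [mem_comp_iff hαg]
      intro H' hH'
      rcases eq_or_ne H' H with rfl | hne
      · rw [hαHx]
        exact mul_ne_zero (ne_of_gt hε) hv
      · intro h0
        have := hε' H' ⟨hH', hne⟩
        rw [h0, mul_zero] at this
        exact lt_irrefl _ this
    have hxch : SCl A α x ∈ chambers A := (chambers_iff hA.1 hαg).mpr ⟨x, hxcomp, rfl⟩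
    obtain ⟨Dx⟩ := exists_cdat hsimp hxch
    -- y₀ is in the closure of that chamber
    have hy₀cl : y₀ ∈ closure (SCl A α x) := by
      apply closure_mem_of_sign hαg hxcomp
      intro H' hH' hne0
      have hne : H' ≠ H := by
        rintro rfl
        exact hne0 hy₀0
      exact hε' H' ⟨hH', hne⟩
    have hcoords : ∀ j, 0 ≤ Dx.g j y₀ := fun j => cd_closure_sub Dx hy₀cl j
    -- some coordinate of y₀ vanishes
    obtain ⟨j0, hj0⟩ : ∃ j, Dx.g j y₀ = 0 := by
      by_contra hno
      push_neg at hno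
      have hmem : y₀ ∈ SCl A α x :=
        (Dx.memC y₀).mpr fun j => (hcoords j).lt_of_ne (Ne.symm (hno j))
      have := (mem_comp_iff hαg).mp (scl_subset_comp hαg x hmem) H hH
      exact this hy₀0
    have hkj0A : LinearMap.ker (Dx.g j0) ∈ A := cd_ker_mem Dx hA.1 hαg hxch j0
    have hkeq : LinearMap.ker (Dx.g j0) = H := by
      by_contra hne
      exact hy₀ _ hkj0A hne (LinearMap.mem_ker.mpr hj0)
    have hHwx : H ∈ walls A (SCl A α x) := by
      rw [cd_walls Dx hA.1 hαg hxch]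
      exact ⟨j0, hkeq.symm⟩
    exact main_claim hA hαg hsimp hx₀ hB hWB _ x hxcomp rfl hHwx
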